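/- For c > 0, as ε → 0⁺, ∫_{1+ε}^{c²+1} √(c²+1−v)/(v−1) dv = 2c·log(2) − 2c + 2c·log c − c·log ε + O(ε). -/

import Mathlib

open Real Asymptotics

lemma closed_form (c : ℝ) (hc : 0 < c) (ε : ℝ) (h0 : 0 < ε) (h1 : ε < c ^ 2) :
    (∫ v in (1 + ε)..(c ^ 2 + 1), Real.sqrt (c ^ 2 + 1 - v) / (v - 1))
      = 2 * c * Real.log (c + Real.sqrt (c ^ 2 - ε)) - c * Real.log ε
        - 2 * Real.sqrt (c ^ 2 - ε) := by
  set F : ℝ → ℝ := fun x =>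
    2 * Real.sqrt (c ^ 2 + 1 - x)
      - c * (Real.log (c + Real.sqrt (c ^ 2 + 1 - x))
             - Real.log (c - Real.sqrt (c ^ 2 + 1 - x))) with hF
  have hab : (1 + ε) ≤ c ^ 2 + 1 := by linarith
  have hsub : ∀ x ∈ Set.Icc (1 + ε) (c ^ 2 + 1),
      Real.sqrt (c ^ 2 + 1 - x) < c := by
    intro x hx
    rw [Real.sqrt_lt' hc]
    have := hx.1; linarith
  have hcs : ContinuousOn (fun x => Real.sqrt (c ^ 2 + 1 - x))
      (Set.Icc (1 + ε) (c ^ 2 + 1)) :=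
    (Real.continuous_sqrt.comp (by continuity)).continuousOn
  have hcont : ContinuousOn F (Set.Icc (1 + ε) (c ^ 2 + 1)) := by
    apply ContinuousOn.sub (continuousOn_const.mul hcs)
    apply ContinuousOn.mul continuousOn_const
    apply ContinuousOn.sub
    · apply ContinuousOn.log (continuousOn_const.add hcs)
      intro x hx
      have := Real.sqrt_nonneg (c ^ 2 + 1 - x); show c + Real.sqrt (c ^ 2 + 1 - x) ≠ 0; positivity
    · apply ContinuousOn.log (continuousOn_const.sub hcs)
      intro x hx
      have := hsub x hx; show c - Real.sqrt (c ^ 2 + 1 - x) ≠ 0; intro h; linarith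
  have hderiv : ∀ x ∈ Set.Ioo (1 + ε) (c ^ 2 + 1),
      HasDerivAt F (Real.sqrt (c ^ 2 + 1 - x) / (x - 1)) x := by
    intro x hx
    set s := Real.sqrt (c ^ 2 + 1 - x) with hs
    have hxpos : 0 < c ^ 2 + 1 - x := by have := hx.2; linarith
    have hspos : 0 < s := Real.sqrt_pos.mpr hxpos
    have hs2 : s ^ 2 = c ^ 2 + 1 - x := Real.sq_sqrt hxpos.le
    have hsc : s < c := hsub x ⟨hx.1.le, hx.2.le⟩
    have hx1 : 0 < x - 1 := by nlinarith
    have hinner : HasDerivAt (fun y : ℝ => c ^ 2 + 1 - y) (-1) x := by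
      simpa using (hasDerivAt_id x).const_sub (c ^ 2 + 1)
    have hsqrt : HasDerivAt (fun y : ℝ => Real.sqrt (c ^ 2 + 1 - y))
        (1 / (2 * s) * (-1)) x :=
      (Real.hasDerivAt_sqrt hxpos.ne').comp x hinner
    have hlog1 : HasDerivAt (fun y : ℝ => Real.log (c + Real.sqrt (c ^ 2 + 1 - y)))
        ((1 / (2 * s) * (-1)) / (c + s)) x := by
      have := ((hasDerivAt_const x c).add hsqrt).log (by show c + Real.sqrt (c ^ 2 + 1 - x) ≠ 0; positivity)
      simpa using this
    have hlog2 : HasDerivAt (fun y : ℝ => Real.log (c - Real.sqrt (c ^ 2 + 1 - y)))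
        ((0 - 1 / (2 * s) * (-1)) / (c - s)) x := by
      have := ((hasDerivAt_const x c).sub hsqrt).log (by linarith : c - s ≠ 0)
      simpa using this
    have hd : HasDerivAt F
        (2 * (1 / (2 * s) * (-1))
          - c * ((1 / (2 * s) * (-1)) / (c + s) - (0 - 1 / (2 * s) * (-1)) / (c - s))) x :=
      ((hsqrt.const_mul 2).sub ((hlog1.sub hlog2).const_mul c))
    convert hd using 1
    have hcs' : c + s ≠ 0 := by positivity
    have hcs'' : c - s ≠ 0 := by linarith
    field_simp
    linear_combination (-2 * s ^ 2) * hs2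
  have hint : IntervalIntegrable (fun v => Real.sqrt (c ^ 2 + 1 - v) / (v - 1))
      MeasureTheory.volume (1 + ε) (c ^ 2 + 1) := by
    apply ContinuousOn.intervalIntegrable
    rw [Set.uIcc_of_le hab]
    apply hcs.div ((continuous_id.sub continuous_const).continuousOn)
    intro x hx h
    change x - 1 = 0 at h
    have := sub_eq_zero.mp h
    have h1 := hx.1
    linarith
  have key := intervalIntegral.integral_eq_sub_of_hasDeriv_right_of_le hab hcont
      (fun x hx => (hderiv x hx).hasDerivWithinAt) hint
  rw [key]
  set t := Real.sqrt (c ^ 2 - ε) with ht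
  have htpos : 0 < t := Real.sqrt_pos.mpr (by linarith)
  have ht2 : t ^ 2 = c ^ 2 - ε := Real.sq_sqrt (by linarith)
  have htc : t < c := by rw [ht, Real.sqrt_lt' hc]; linarith
  have hFb : F (c ^ 2 + 1) = 0 := by
    simp [hF]
  have hFa : F (1 + ε) = 2 * t - c * (Real.log (c + t) - Real.log (c - t)) := by
    simp only [hF]
    norm_num [show c ^ 2 + 1 - (1 + ε) = c ^ 2 - ε by ring, ht]
  have hct : c - t = ε / (c + t) := by
    field_simp
    nlinarith [ht2]
  have hlog : Real.log (c - t) = Real.log ε - Real.log (c + t) := by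
    rw [hct, Real.log_div h0.ne' (by positivity)]
  rw [hFb, hFa, hlog]
  ring

theorem stmt_5 (c : ℝ) (hc : 0 < c) :
    (fun ε : ℝ =>
        (∫ v in (1 + ε)..(c ^ 2 + 1), Real.sqrt (c ^ 2 + 1 - v) / (v - 1))
          - (2 * c * Real.log 2 - 2 * c + 2 * c * Real.log c - c * Real.log ε))
      =O[nhdsWithin 0 (Set.Ioi 0)] (fun ε : ℝ => ε) := by
  set D : ℝ → ℝ := fun ε =>
    2 * c * Real.log (c + Real.sqrt (c ^ 2 - ε)) - 2 * Real.sqrt (c ^ 2 - ε)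
      + 2 * c - 2 * c * Real.log 2 - 2 * c * Real.log c with hD
  -- D is differentiable at 0 and D 0 = 0
  have hsq : HasDerivAt (fun ε : ℝ => Real.sqrt (c ^ 2 - ε))
      (1 / (2 * Real.sqrt (c ^ 2)) * (-1)) 0 := by
    have hinner : HasDerivAt (fun ε : ℝ => c ^ 2 - ε) (-1) 0 := by
      simpa using (hasDerivAt_id (0:ℝ)).const_sub (c ^ 2)
    have := (Real.hasDerivAt_sqrt (by simpa using pow_ne_zero 2 hc.ne' : c ^ 2 - (0:ℝ) ≠ 0)).comp 0 hinner
    simpa [Function.comp_def] using this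
  have hc2 : Real.sqrt (c ^ 2) = c := Real.sqrt_sq hc.le
  have hlog : HasDerivAt (fun ε : ℝ => Real.log (c + Real.sqrt (c ^ 2 - ε)))
      ((1 / (2 * Real.sqrt (c ^ 2)) * (-1)) / (c + Real.sqrt (c ^ 2 - 0))) 0 := by
    have := ((hasDerivAt_const (0:ℝ) c).add hsq).log ?_
    · simpa using this
    · show c + Real.sqrt (c ^ 2 - 0) ≠ 0
      rw [show c ^ 2 - (0:ℝ) = c ^ 2 by ring, hc2]; positivity
  have hDd : HasDerivAt D
      (2 * c * ((1 / (2 * Real.sqrt (c ^ 2)) * (-1)) / (c + Real.sqrt (c ^ 2 - 0)))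
        - 2 * (1 / (2 * Real.sqrt (c ^ 2)) * (-1))) 0 := by
    have := ((hlog.const_mul (2 * c)).sub (hsq.const_mul 2))
    simpa [hD] using (((this.add_const (2*c)).sub_const (2 * c * Real.log 2)).sub_const
      (2 * c * Real.log c))
  have hD0 : D 0 = 0 := by
    simp only [hD]
    rw [show c ^ 2 - (0:ℝ) = c ^ 2 by ring, hc2,
      show c + c = 2 * c by ring, Real.log_mul two_ne_zero hc.ne']
    ring
  have hO : D =O[nhds 0] (fun ε : ℝ => ε) := by
    have := hDd.isBigO_sub
    simpa [hD0] using this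
  have heq : (fun ε : ℝ =>
        (∫ v in (1 + ε)..(c ^ 2 + 1), Real.sqrt (c ^ 2 + 1 - v) / (v - 1))
          - (2 * c * Real.log 2 - 2 * c + 2 * c * Real.log c - c * Real.log ε))
      =ᶠ[nhdsWithin 0 (Set.Ioi 0)] D := by
    filter_upwards [Ioo_mem_nhdsGT_of_mem
      (Set.mem_Ico.mpr ⟨le_refl 0, by positivity⟩ : (0:ℝ) ∈ Set.Ico 0 (c ^ 2))]
      with ε hε
    rw [closed_form c hc ε hε.1 hε.2]
    simp only [hD]; ring
  exact (hO.mono nhdsWithin_le_nhds).congr' heq.symm (Filter.EventuallyEq.refl _ _)
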